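/- Let R be a principal ideal domain, (M,λ) a non-degenerate symmetric bilinear form on a finitely generated free module, (v₁,...,v_k) an isotropic unimodular sequence, and (w₁,...,w_k), (w'₁,...,w'_k) two witnessing sequences to it. Then the orthogonal complements of the subforms spanned by {v₁,w₁,...,v_k,w_k} and {v₁,w'₁,...,v_k,w'_k} are isometric. Explicitly, for a basis a₁,...,a_n of the first complement, the vectors a'ᵢ = aᵢ - ∑ⱼ λ(aᵢ, w'ⱼ) vⱼ lie in the second complement and satisfy λ(a'ᵢ, a'ⱼ) = λ(aᵢ, aⱼ), giving an isometry. -/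

import Mathlib

/-- An isotropic unimodular sequence: the `v i` form a basis of a free direct summand
of `M` and are pairwise (and self) orthogonal for `B`. -/
def IsoUnimodSeq (R : Type*) [CommRing R] {M : Type*} [AddCommGroup M] [Module R M]
    (B : LinearMap.BilinForm R M) {k : ℕ} (v : Fin k → M) : Prop :=
  LinearIndependent R v ∧
  (∃ q : Submodule R M, IsCompl (Submodule.span R (Set.range v)) q) ∧
  ∀ i j, B (v i) (v j) = 0

/-- A witnessing sequence `w` to an isotropic unimodular sequence `v`:
`B vᵢ wⱼ = δᵢⱼ` and `B wᵢ wⱼ = 0` for `i ≠ j`. -/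
def Witnessing (R : Type*) [CommRing R] {M : Type*} [AddCommGroup M] [Module R M]
    (B : LinearMap.BilinForm R M) {k : ℕ} (v w : Fin k → M) : Prop :=
  (∀ i j, B (v i) (w j) = if i = j then 1 else 0) ∧
  ∀ i j, i ≠ j → B (w i) (w j) = 0

section Aux

variable {R : Type*} [CommRing R] {M : Type*} [AddCommGroup M] [Module R M]
  (B : LinearMap.BilinForm R M)

lemma aux_mem_orth_span {S : Set M} {a : M} :
    a ∈ B.orthogonal (Submodule.span R S) ↔ ∀ s ∈ S, B s a = 0 := by
  constructor
  · intro h s hs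
    exact h s (Submodule.subset_span hs)
  · intro h n hn
    have hle : Submodule.span R S ≤ LinearMap.ker (B.flip a) := by
      rw [Submodule.span_le]
      intro s hs
      simp [LinearMap.mem_ker, h s hs]
    simpa [LinearMap.BilinForm.isOrtho_def] using hle hn

variable {k : ℕ} {v w w' : Fin k → M}

/-- The map `a ↦ a - ∑ j, B a (u j) • v j` as a linear map. -/
noncomputable def auxF (u : Fin k → M) : M →ₗ[R] M :=
  LinearMap.id - ∑ j, (B.flip (u j)).smulRight (v j)

lemma auxF_apply (u : Fin k → M) (a : M) :
    auxF B (v := v) u a = a - ∑ j, B a (u j) • v j := by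
  simp [auxF, LinearMap.sum_apply]

lemma aux_main (hsymm : B.IsSymm) (hvv : ∀ i j, B (v i) (v j) = 0)
    (hw : Witnessing R B v w) (hw' : Witnessing R B v w')
    (a : M) (ha : a ∈ B.orthogonal (Submodule.span R (Set.range v ∪ Set.range w))) :
    ((a - ∑ j, B a (w' j) • v j) ∈
        B.orthogonal (Submodule.span R (Set.range v ∪ Set.range w'))) ∧
    (∀ j, B (a - ∑ i, B a (w' i) • v i) (w j) = - B a (w' j)) := by
  rw [aux_mem_orth_span] at ha
  have hva : ∀ i, B (v i) a = 0 := fun i => ha _ (Or.inl ⟨i, rfl⟩)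
  have hwa : ∀ i, B (w i) a = 0 := fun i => ha _ (Or.inr ⟨i, rfl⟩)
  have hav : ∀ i, B a (v i) = 0 := fun i => by rw [← hsymm.eq (v i) a]; simp [hva i]
  have haw : ∀ i, B a (w i) = 0 := fun i => by rw [← hsymm.eq (w i) a]; simp [hwa i]
  constructor
  · rw [aux_mem_orth_span]
    rintro s (⟨i, rfl⟩ | ⟨i, rfl⟩)
    · simp [hva i, hvv i]
    · have h1 : ∀ j, B (w' i) (v j) = if j = i then 1 else 0 := fun j => by
        rw [← hsymm.eq (v j) (w' i)]; simp [hw'.1 j i]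
      have h2 : B (w' i) a = B a (w' i) := by rw [← hsymm.eq (w' i) a]
      simp [mul_ite, h1, h2, Finset.sum_ite_eq]
  · intro j
    simp [haw j, hw.1, mul_ite, Finset.sum_ite_eq']

lemma aux_form (hsymm : B.IsSymm) (hvv : ∀ i j, B (v i) (v j) = 0)
    (hw : Witnessing R B v w) (hw' : Witnessing R B v w')
    (a : M) (ha : a ∈ B.orthogonal (Submodule.span R (Set.range v ∪ Set.range w)))
    (b : M) (hb : b ∈ B.orthogonal (Submodule.span R (Set.range v ∪ Set.range w))) :
    B (a - ∑ j, B a (w' j) • v j) (b - ∑ j, B b (w' j) • v j) = B a b := by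
  rw [aux_mem_orth_span] at ha hb
  have hav : ∀ i, B a (v i) = 0 := fun i => by
    rw [← hsymm.eq (v i) a]; simp [ha _ (Or.inl ⟨i, rfl⟩)]
  have hvb : ∀ i, B (v i) b = 0 := fun i => hb _ (Or.inl ⟨i, rfl⟩)
  simp [hav, hvb, hvv, Finset.mul_sum]

end Aux


/-- If `w` and `w'` are two witnessing sequences to an isotropic
unimodular sequence `v`, then the orthogonal complements of the subforms spanned by
`{vᵢ, wᵢ}` and `{vᵢ, w'ᵢ}` are isometric; explicitly `a ↦ a - ∑ⱼ B(a, w'ⱼ) vⱼ` maps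
the first complement into the second, preserves the form, and gives an isometry. -/
theorem stmt_19 (R : Type*) [CommRing R] [IsDomain R] [IsPrincipalIdealRing R]
    (M : Type*) [AddCommGroup M] [Module R M] [Module.Free R M] [Module.Finite R M]
    (B : LinearMap.BilinForm R M) (hsymm : B.IsSymm)
    (hnd : Function.Bijective fun v : M => B v)
    (k : ℕ) (v w w' : Fin k → M) (hv : IsoUnimodSeq R B v)
    (hw : Witnessing R B v w) (hw' : Witnessing R B v w') :
    (∀ a ∈ B.orthogonal (Submodule.span R (Set.range v ∪ Set.range w)),
      (a - ∑ j, B a (w' j) • v j) ∈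
        B.orthogonal (Submodule.span R (Set.range v ∪ Set.range w'))) ∧
    (∀ a ∈ B.orthogonal (Submodule.span R (Set.range v ∪ Set.range w)),
      ∀ b ∈ B.orthogonal (Submodule.span R (Set.range v ∪ Set.range w)),
        B (a - ∑ j, B a (w' j) • v j) (b - ∑ j, B b (w' j) • v j) = B a b) ∧
    ∃ e : B.orthogonal (Submodule.span R (Set.range v ∪ Set.range w)) ≃ₗ[R]
        B.orthogonal (Submodule.span R (Set.range v ∪ Set.range w')),
      ∀ x y : B.orthogonal (Submodule.span R (Set.range v ∪ Set.range w)),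
        B ((e x : M)) ((e y : M)) = B (x : M) (y : M) := by
  obtain ⟨-, -, hvv⟩ := hv
  refine ⟨fun a ha => (aux_main B hsymm hvv hw hw' a ha).1,
    fun a ha b hb => aux_form B hsymm hvv hw hw' a ha b hb, ?_⟩
  have hmap : ∀ a ∈ B.orthogonal (Submodule.span R (Set.range v ∪ Set.range w)),
      auxF B (v := v) w' a ∈ B.orthogonal (Submodule.span R (Set.range v ∪ Set.range w')) := by
    intro a ha
    rw [auxF_apply]
    exact (aux_main B hsymm hvv hw hw' a ha).1
  have hmap' : ∀ a ∈ B.orthogonal (Submodule.span R (Set.range v ∪ Set.range w')),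
      auxF B (v := v) w a ∈ B.orthogonal (Submodule.span R (Set.range v ∪ Set.range w)) := by
    intro a ha
    rw [auxF_apply]
    exact (aux_main B hsymm hvv hw' hw a ha).1
  have hinv1 : ∀ a ∈ B.orthogonal (Submodule.span R (Set.range v ∪ Set.range w)),
      auxF B (v := v) w (auxF B (v := v) w' a) = a := by
    intro a ha
    have h2 := (aux_main B hsymm hvv hw hw' a ha).2
    rw [auxF_apply, auxF_apply]
    have : ∀ j, B (a - ∑ i, B a (w' i) • v i) (w j) = - B a (w' j) := h2
    simp only [this, neg_smul, Finset.sum_neg_distrib, sub_neg_eq_add, sub_add_cancel]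
  have hinv2 : ∀ a ∈ B.orthogonal (Submodule.span R (Set.range v ∪ Set.range w')),
      auxF B (v := v) w' (auxF B (v := v) w a) = a := by
    intro a ha
    have h2 := (aux_main B hsymm hvv hw' hw a ha).2
    rw [auxF_apply, auxF_apply]
    simp only [h2, neg_smul, Finset.sum_neg_distrib, sub_neg_eq_add, sub_add_cancel]
  refine ⟨LinearEquiv.ofLinear ((auxF B (v := v) w').restrict hmap)
    ((auxF B (v := v) w).restrict hmap') ?_ ?_, ?_⟩
  · ext x
    simp only [LinearMap.comp_apply, LinearMap.id_apply, LinearMap.restrict_apply]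
    exact hinv2 x x.2
  · ext x
    simp only [LinearMap.comp_apply, LinearMap.id_apply, LinearMap.restrict_apply]
    exact hinv1 x x.2
  · intro x y
    show B (auxF B (v := v) w' x) (auxF B (v := v) w' y) = _
    rw [auxF_apply, auxF_apply]
    exact aux_form B hsymm hvv hw hw' x x.2 y y.2
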